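/- Main stack theorem, guarantee update (1/(d(1+ε))-approximation): Let d : ℕ with 0 < d and ε ≥ 0. Let e : Fin k → Finset V and w' : Fin k → ℝ be a stack run with the guarantee update δ_g, i.e. 0 ≤ w' i for all i and W (e i) = w' i + ∑_{v ∈ e i} ∑_{j < i, v ∈ e j} w' j for every i, with (e i).card ≤ d for all i, and final dual variables φ v := ∑_{i : v ∈ e i} w' i. Let E be a finite set of hyperedges such that W f ≤ (1+ε) · ∑_{v ∈ f} φ v for every f ∈ E. Let M ⊆ Fin k be an unwinding matching: the hyperedges e i for i ∈ M are pairwise disjoint, and every index j : Fin k admits some i ∈ M with j ≤ i and (e i ∩ e j).Nonempty. Then every matching M* ⊆ E (pairwise disjoint hyperedges) satisfies ∑_{f ∈ M*} W f ≤ d·(1+ε) · ∑_{i ∈ M} W (e i). -/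

import Mathlib

/-- Main stack theorem, guarantee update (`1/(d(1+ε))`-approximation): for a
stack run `e, w'` with the guarantee update, all edge sizes at most `d`, final
duals `φ v = ∑ i with v ∈ e i, w' i`, a set `E` of hyperedges with
`W f ≤ (1+ε) * ∑ v ∈ f, φ v` for every `f ∈ E`, and an unwinding matching
`M ⊆ Fin k`, every matching `M* ⊆ E` satisfies
`∑ f ∈ M*, W f ≤ d*(1+ε) * ∑ i ∈ M, W (e i)`. -/
theorem stack_guarantee_approximation
    {V : Type*} [Fintype V] [DecidableEq V] {k : ℕ}
    (d : ℕ) (hd : 0 < d) (ε : ℝ) (hε : 0 ≤ ε)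
    (W : Finset V → ℝ) (e : Fin k → Finset V) (w' : Fin k → ℝ)
    (hw_nonneg : ∀ i, 0 ≤ w' i)
    (hrun : ∀ i : Fin k, W (e i) = w' i +
      ∑ v ∈ e i, ∑ j ∈ Finset.univ.filter (fun j : Fin k => j < i ∧ v ∈ e j), w' j)
    (hcard : ∀ i : Fin k, (e i).card ≤ d)
    (E : Finset (Finset V))
    (hE : ∀ f ∈ E, W f ≤ (1 + ε) *
      ∑ v ∈ f, ∑ i ∈ Finset.univ.filter (fun i : Fin k => v ∈ e i), w' i)
    (M : Finset (Fin k))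
    (hM_disj : ∀ i ∈ M, ∀ j ∈ M, i ≠ j → Disjoint (e i) (e j))
    (hM_cover : ∀ j : Fin k, ∃ i ∈ M, j ≤ i ∧ (e i ∩ e j).Nonempty)
    (Mstar : Finset (Finset V)) (hMstarE : Mstar ⊆ E)
    (hMstar_disj : ∀ f ∈ Mstar, ∀ g ∈ Mstar, f ≠ g → Disjoint f g) :
    ∑ f ∈ Mstar, W f ≤ (d : ℝ) * (1 + ε) * ∑ i ∈ M, W (e i) := by
  classical
  set φ : V → ℝ := fun v => ∑ i ∈ Finset.univ.filter (fun i : Fin k => v ∈ e i), w' i with hφ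
  have hφ_nonneg : ∀ v, 0 ≤ φ v := fun v => Finset.sum_nonneg fun i _ => hw_nonneg i
  -- key lemma : the weight of e i dominates the sum of gains of earlier intersecting edges
  have key : ∀ i : Fin k,
      ∑ j ∈ Finset.univ.filter (fun j : Fin k => j ≤ i ∧ (e i ∩ e j).Nonempty), w' j
        ≤ W (e i) := by
    intro i
    rw [hrun i]
    have h1 : Finset.univ.filter (fun j : Fin k => j ≤ i ∧ (e i ∩ e j).Nonempty)
        ⊆ insert i (Finset.univ.filter (fun j : Fin k => j < i ∧ (e i ∩ e j).Nonempty)) := by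
      intro j hj
      simp only [Finset.mem_filter, Finset.mem_univ, true_and] at hj
      rcases lt_or_eq_of_le hj.1 with h | h
      · exact Finset.mem_insert_of_mem (by simp [Finset.mem_filter, h, hj.2])
      · simp [h]
    have h2 : ∑ j ∈ Finset.univ.filter (fun j : Fin k => j < i ∧ (e i ∩ e j).Nonempty), w' j
        ≤ ∑ v ∈ e i, ∑ j ∈ Finset.univ.filter (fun j : Fin k => j < i ∧ v ∈ e j), w' j := by
      have hrhs : ∑ v ∈ e i, ∑ j ∈ Finset.univ.filter (fun j : Fin k => j < i ∧ v ∈ e j), w' j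
          = ∑ j : Fin k, ∑ v ∈ e i, if j < i ∧ v ∈ e j then w' j else 0 := by
        rw [Finset.sum_comm]
        exact Finset.sum_congr rfl fun v _ => Finset.sum_filter _ _
      rw [hrhs, Finset.sum_filter]
      refine Finset.sum_le_sum fun j _ => ?_
      by_cases h : j < i ∧ (e i ∩ e j).Nonempty
      · simp only [h, if_true]
        obtain ⟨v0, hv0⟩ := h.2
        rw [Finset.mem_inter] at hv0
        have := Finset.single_le_sum
          (f := fun v => if j < i ∧ v ∈ e j then w' j else 0)
          (fun v _ => by split_ifs; exacts [hw_nonneg j, le_refl 0]) hv0.1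
        simpa [h.1, hv0.2] using this
      · simp only [h, if_false]
        exact Finset.sum_nonneg fun v _ => by split_ifs; exacts [hw_nonneg j, le_refl 0]
    calc ∑ j ∈ Finset.univ.filter (fun j : Fin k => j ≤ i ∧ (e i ∩ e j).Nonempty), w' j
        ≤ ∑ j ∈ insert i
            (Finset.univ.filter (fun j : Fin k => j < i ∧ (e i ∩ e j).Nonempty)), w' j :=
          Finset.sum_le_sum_of_subset_of_nonneg h1 (fun j _ _ => hw_nonneg j)
      _ = w' i + ∑ j ∈ Finset.univ.filter
            (fun j : Fin k => j < i ∧ (e i ∩ e j).Nonempty), w' j := by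
          rw [Finset.sum_insert (by simp)]
      _ ≤ w' i + ∑ v ∈ e i, ∑ j ∈ Finset.univ.filter (fun j : Fin k => j < i ∧ v ∈ e j), w' j :=
          by linarith
  -- total gain is at most the matching weight
  have hsum_w : ∑ j : Fin k, w' j ≤ ∑ i ∈ M, W (e i) := by
    choose c hc1 hc2 hc3 using hM_cover
    calc ∑ j : Fin k, w' j
        = ∑ i ∈ M, ∑ j ∈ Finset.univ.filter (fun j : Fin k => c j = i), w' j :=
          (Finset.sum_fiberwise_of_maps_to (fun j _ => hc1 j) w').symm
      _ ≤ ∑ i ∈ M, W (e i) := by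
          refine Finset.sum_le_sum fun i hi => ?_
          refine le_trans (Finset.sum_le_sum_of_subset_of_nonneg ?_ fun j _ _ => hw_nonneg j)
            (key i)
          intro j hj
          simp only [Finset.mem_filter, Finset.mem_univ, true_and] at hj ⊢
          subst hj
          exact ⟨hc2 j, hc3 j⟩
  -- total dual equals ∑ i, card (e i) * w' i
  have hφ_total : ∑ v : V, φ v = ∑ i : Fin k, ((e i).card : ℝ) * w' i := by
    simp only [hφ]
    rw [Finset.sum_comm' (s := Finset.univ) (t := fun v => Finset.univ.filter
      (fun i : Fin k => v ∈ e i)) (t' := Finset.univ)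
      (s' := fun i => Finset.univ.filter (fun v : V => v ∈ e i)) (by simp)]
    refine Finset.sum_congr rfl fun i _ => ?_
    rw [Finset.sum_const]
    have : Finset.univ.filter (fun v : V => v ∈ e i) = e i := by
      ext v; simp
    rw [this, nsmul_eq_mul]
  have hφ_le : ∑ v : V, φ v ≤ (d : ℝ) * ∑ j : Fin k, w' j := by
    rw [hφ_total, Finset.mul_sum]
    refine Finset.sum_le_sum fun i _ => ?_
    exact mul_le_mul_of_nonneg_right (by exact_mod_cast hcard i) (hw_nonneg i)
  -- main bound for Mstar
  have hMb : ∑ f ∈ Mstar, W f ≤ (1 + ε) * ∑ v : V, φ v := by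
    have h1 : ∑ f ∈ Mstar, W f ≤ (1 + ε) * ∑ f ∈ Mstar, ∑ v ∈ f, φ v := by
      rw [Finset.mul_sum]
      exact Finset.sum_le_sum fun f hf => hE f (hMstarE hf)
    have h2 : ∑ f ∈ Mstar, ∑ v ∈ f, φ v ≤ ∑ v : V, φ v := by
      have hdisj : (Mstar : Set (Finset V)).PairwiseDisjoint id :=
        fun f hf g hg hfg => hMstar_disj f hf g hg hfg
      calc ∑ f ∈ Mstar, ∑ v ∈ f, φ v = ∑ v ∈ Mstar.biUnion id, φ v :=
            (Finset.sum_biUnion hdisj).symm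
        _ ≤ ∑ v : V, φ v :=
            Finset.sum_le_sum_of_subset_of_nonneg (Finset.subset_univ _)
              (fun v _ _ => hφ_nonneg v)
    calc ∑ f ∈ Mstar, W f ≤ (1 + ε) * ∑ f ∈ Mstar, ∑ v ∈ f, φ v := h1
      _ ≤ (1 + ε) * ∑ v : V, φ v := by
          exact mul_le_mul_of_nonneg_left h2 (by linarith)
  have h1ε : (0:ℝ) ≤ 1 + ε := by linarith
  calc ∑ f ∈ Mstar, W f ≤ (1 + ε) * ∑ v : V, φ v := hMb
    _ ≤ (1 + ε) * ((d : ℝ) * ∑ j : Fin k, w' j) := mul_le_mul_of_nonneg_left hφ_le h1ε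
    _ ≤ (1 + ε) * ((d : ℝ) * ∑ i ∈ M, W (e i)) := by
        refine mul_le_mul_of_nonneg_left (mul_le_mul_of_nonneg_left hsum_w ?_) h1ε
        positivity
    _ = (d : ℝ) * (1 + ε) * ∑ i ∈ M, W (e i) := by ring
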